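/- In dimension n = 2, for δ, Λ, N > 0 the function w(x₁, x₂) = δ(|x₁| + x₁²/2) + (Λ/δ)x₂² − N x₂ is convex on ℝ², and its Monge–Ampère measure satisfies M w(E) ≥ 2Λ |E| for every Borel set E ⊂ ℝ²; in particular det D²w = 2Λ > Λ at every point with x₁ ≠ 0. -/

import Mathlib

open Set MeasureTheory
open scoped RealInnerProductSpace

/-- The subdifferential of `u` (relative to the set `s`) at `x`. -/
def subgradientAt (n : ℕ) (u : EuclideanSpace ℝ (Fin n) → ℝ)
    (s : Set (EuclideanSpace ℝ (Fin n))) (x : EuclideanSpace ℝ (Fin n)) :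
    Set (EuclideanSpace ℝ (Fin n)) :=
  {p | ∀ y ∈ s, u x + ⟪p, y - x⟫ ≤ u y}

local notation "E2" => EuclideanSpace ℝ (Fin 2)

noncomputable def vec2 (a b : ℝ) : E2 := (WithLp.equiv 2 (Fin 2 → ℝ)).symm ![a, b]
@[simp] lemma vec2_zero (a b : ℝ) : vec2 a b 0 = a := rfl
@[simp] lemma vec2_one (a b : ℝ) : vec2 a b 1 = b := rfl

noncomputable def pr (i : Fin 2) : E2 →L[ℝ] ℝ := EuclideanSpace.proj i
@[simp] lemma pr_apply (i : Fin 2) (x : E2) : pr i x = x i := rfl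

noncomputable def dmap (a b : ℝ) : E2 →ₗ[ℝ] E2 where
  toFun x := vec2 (a * x 0) (b * x 1)
  map_add' x y := by
    refine PiLp.ext fun i => ?_
    fin_cases i <;> simp [vec2, PiLp.add_apply, mul_add]
  map_smul' c x := by
    refine PiLp.ext fun i => ?_
    fin_cases i <;> simp [vec2, PiLp.smul_apply] <;> ring

lemma dmap_det (a b : ℝ) : LinearMap.det (dmap a b) = a * b := by
  let B := (EuclideanSpace.basisFun (Fin 2) ℝ).toBasis
  rw [← LinearMap.det_toMatrix B, Matrix.det_fin_two]
  simp [LinearMap.toMatrix_apply, B, dmap, vec2, EuclideanSpace.basisFun_apply,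
    EuclideanSpace.single_apply]

lemma affine_image_vol (L : E2 →ₗ[ℝ] E2) (c : E2) (A : Set E2) :
    volume ((fun x => L x + c) '' A) = ENNReal.ofReal |LinearMap.det L| * volume A := by
  have h1 : (fun x => L x + c) '' A = (fun v => v + c) '' (L '' A) := by
    rw [Set.image_image]
  have h2 : (fun v => v + c) '' (L '' A) = (fun v => v + (-c)) ⁻¹' (L '' A) := by
    ext v
    constructor
    · rintro ⟨u, hu, rfl⟩; simpa using hu
    · intro hv; exact ⟨v + -c, hv, neg_add_cancel_right v c⟩
  rw [h1, h2, measure_preimage_add_right, Measure.addHaar_image_linearMap]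

lemma hyperplane_null : volume {x : E2 | x 0 = 0} = 0 := by
  have h : {x : E2 | x 0 = 0} =
      (LinearMap.ker ((pr 0 : E2 →L[ℝ] ℝ) : E2 →ₗ[ℝ] ℝ) : Set E2) := by
    ext x; simp [LinearMap.mem_ker]
  rw [h]
  apply Measure.addHaar_submodule
  intro htop
  have : (EuclideanSpace.single 0 (1:ℝ)) ∈
      LinearMap.ker ((pr 0 : E2 →L[ℝ] ℝ) : E2 →ₗ[ℝ] ℝ) := htop ▸ Submodule.mem_top
  simp [LinearMap.mem_ker] at this

lemma mem_subgrad (δ Λ N : ℝ) (hδ : 0 < δ) (hΛ : 0 < Λ) (w : E2 → ℝ)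
    (hw : ∀ x : E2, w x = δ * (|x 0| + (x 0) ^ 2 / 2) + (Λ / δ) * (x 1) ^ 2 - N * x 1)
    (s : ℝ) (hs : s = 1 ∨ s = -1) (x : E2) (hx : |x 0| = s * x 0) :
    vec2 (δ*(s + x 0)) ((2*Λ/δ)*(x 1) - N) ∈ subgradientAt 2 w Set.univ x := by
  intro y _
  rw [hw x, hw y]
  have hinner : ⟪vec2 (δ*(s + x 0)) ((2*Λ/δ)*(x 1) - N), y - x⟫ =
      (δ*(s + x 0)) * (y 0 - x 0) + ((2*Λ/δ)*(x 1) - N) * (y 1 - x 1) := by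
    simp [PiLp.inner_apply, Fin.sum_univ_two, RCLike.inner_apply, conj_trivial,
      PiLp.sub_apply]
    ring
  rw [hinner, hx]
  have h3 : s * y 0 ≤ |y 0| := by
    rcases hs with rfl | rfl
    · simpa using le_abs_self (y 0)
    · simpa using neg_le_abs (y 0)
  have h1 : 0 ≤ δ/2 * (y 0 - x 0)^2 := by positivity
  have h2 : 0 ≤ Λ/δ * (y 1 - x 1)^2 := by positivity
  have key : δ * (|y 0| + (y 0)^2/2) + Λ/δ * (y 1)^2 - N * y 1 -
      (δ * (s * x 0 + (x 0)^2/2) + Λ/δ * (x 1)^2 - N * x 1 +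
        (δ * (s + x 0) * (y 0 - x 0) + (2*Λ/δ * x 1 - N) * (y 1 - x 1)))
      = δ * (|y 0| - s * y 0) + δ/2 * (y 0 - x 0)^2 + Λ/δ * (y 1 - x 1)^2 := by ring
  have h4 : 0 ≤ δ * (|y 0| - s * y 0) := mul_nonneg hδ.le (by linarith)
  linarith [key, h1, h2, h4]

lemma part2 (δ Λ N : ℝ) (hδ : 0 < δ) (hΛ : 0 < Λ) (hN : 0 < N) (w : E2 → ℝ)
    (hw : ∀ x : E2, w x = δ * (|x 0| + (x 0) ^ 2 / 2) + (Λ / δ) * (x 1) ^ 2 - N * x 1)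
    (E : Set E2) (hE : MeasurableSet E) :
    ENNReal.ofReal (2 * Λ) * volume E ≤
      volume (⋃ x ∈ E, subgradientAt 2 w Set.univ x) := by
  set L := dmap δ (2*Λ/δ) with hL
  have hdet : LinearMap.det L = 2*Λ := by
    rw [hL, dmap_det]; field_simp
  -- affine maps T s
  have hT : ∀ (s : ℝ) (x : E2), L x + vec2 (δ*s) (-N) = vec2 (δ*(s + x 0)) ((2*Λ/δ)*(x 1) - N) := by
    intro s x
    refine PiLp.ext fun i => ?_
    fin_cases i <;>
      simp [hL, dmap, vec2, PiLp.add_apply] <;> ring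
  set Ep := E ∩ {x : E2 | 0 < x 0} with hEp
  set Em := E ∩ {x : E2 | x 0 < 0} with hEm
  set A := (fun x => L x + vec2 (δ*1) (-N)) '' Ep with hA
  set Bs := (fun x => L x + vec2 (δ*(-1)) (-N)) '' Em with hB
  have hAG : A ⊆ ⋃ x ∈ E, subgradientAt 2 w Set.univ x := by
    rintro _ ⟨z, hz, rfl⟩
    refine Set.mem_biUnion hz.1 ?_
    show L z + vec2 (δ*1) (-N) ∈ _
    rw [hT 1 z]
    exact mem_subgrad δ Λ N hδ hΛ w hw 1 (Or.inl rfl) z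
      (by rw [abs_of_pos hz.2]; ring)
  have hBG : Bs ⊆ ⋃ x ∈ E, subgradientAt 2 w Set.univ x := by
    rintro _ ⟨z, hz, rfl⟩
    refine Set.mem_biUnion hz.1 ?_
    show L z + vec2 (δ*(-1)) (-N) ∈ _
    rw [hT (-1) z]
    exact mem_subgrad δ Λ N hδ hΛ w hw (-1) (Or.inr rfl) z
      (by rw [abs_of_neg hz.2]; ring)
  -- separation
  have hApos : ∀ p ∈ A, 0 < p 0 := by
    rintro _ ⟨z, hz, rfl⟩
    show 0 < (L z + vec2 (δ*1) (-N)) 0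
    rw [hT 1 z, vec2_zero]
    nlinarith [show (0:ℝ) < z 0 from hz.2, hδ]
  have hBneg : ∀ p ∈ Bs, p 0 < 0 := by
    rintro _ ⟨z, hz, rfl⟩
    show (L z + vec2 (δ*(-1)) (-N)) 0 < 0
    rw [hT (-1) z, vec2_zero]
    nlinarith [show z 0 < (0:ℝ) from hz.2, hδ]
  have hS : MeasurableSet {p : E2 | 0 < p 0} :=
    (isOpen_lt continuous_const (pr 0).continuous).measurableSet
  have hsplit := measure_inter_add_diff (μ := volume) (A ∪ Bs) hS
  have hvolAB : volume A + volume Bs ≤ volume (A ∪ Bs) := by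
    rw [← hsplit]
    gcongr
    · intro p hp; exact ⟨Or.inl hp, hApos p hp⟩
    · intro p hp; exact ⟨Or.inr hp, fun h => absurd (hBneg p hp) (not_lt.2 h.le)⟩
  have hvolA : volume A = ENNReal.ofReal (2*Λ) * volume Ep := by
    rw [hA, affine_image_vol, hdet, abs_of_pos (by linarith)]
  have hvolB : volume Bs = ENNReal.ofReal (2*Λ) * volume Em := by
    rw [hB, affine_image_vol, hdet, abs_of_pos (by linarith)]
  -- vol E ≤ vol Ep + vol Em
  have hEsplit := measure_inter_add_diff (μ := volume) E hS
  have hEdiff : volume (E \ {p : E2 | 0 < p 0}) ≤ volume Em := by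
    have hsub : E \ {p : E2 | 0 < p 0} ⊆ Em ∪ {x : E2 | x 0 = 0} := by
      rintro x ⟨hxE, hx⟩
      rcases lt_trichotomy (x 0) 0 with h | h | h
      · exact Or.inl ⟨hxE, h⟩
      · exact Or.inr h
      · exact absurd h hx
    calc volume (E \ {p : E2 | 0 < p 0}) ≤ volume (Em ∪ {x : E2 | x 0 = 0}) :=
          measure_mono hsub
      _ ≤ volume Em + volume {x : E2 | x 0 = 0} := measure_union_le _ _
      _ = volume Em := by rw [hyperplane_null, add_zero]
  have hEle : volume E ≤ volume Ep + volume Em := by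
    calc volume E = volume (E ∩ {p : E2 | 0 < p 0}) + volume (E \ {p : E2 | 0 < p 0}) :=
          hEsplit.symm
      _ ≤ volume Ep + volume Em := by exact add_le_add le_rfl hEdiff
  calc ENNReal.ofReal (2*Λ) * volume E
      ≤ ENNReal.ofReal (2*Λ) * (volume Ep + volume Em) := by gcongr
    _ = volume A + volume Bs := by rw [mul_add, hvolA, hvolB]
    _ ≤ volume (A ∪ Bs) := hvolAB
    _ ≤ volume (⋃ x ∈ E, subgradientAt 2 w Set.univ x) :=
        measure_mono (Set.union_subset hAG hBG)

-- second-derivative map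
noncomputable def bmap (δ Λ : ℝ) : E2 →L[ℝ] (E2 →L[ℝ] ℝ) :=
  (pr 0).smulRight (δ • pr 0) + (pr 1).smulRight ((2*Λ/δ) • pr 1)

lemma bmap_apply (δ Λ : ℝ) (u v : E2) :
    bmap δ Λ u v = u 0 * (δ * v 0) + u 1 * (2*Λ/δ * v 1) := by
  simp [bmap, ContinuousLinearMap.smulRight_apply, smul_eq_mul]

lemma hasF (δ Λ N s : ℝ) (w : E2 → ℝ)
    (hw : ∀ x : E2, w x = δ * (|x 0| + (x 0) ^ 2 / 2) + (Λ / δ) * (x 1) ^ 2 - N * x 1)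
    (y : E2) (hy : 0 < s * y 0) (hs : s = 1 ∨ s = -1) :
    HasFDerivAt w ((δ*(s + y 0)) • pr 0 + ((2*Λ/δ)*(y 1) - N) • pr 1) y := by
  have h0 : HasFDerivAt (fun x : E2 => x 0) (pr 0) y := (pr 0).hasFDerivAt
  have h1 : HasFDerivAt (fun x : E2 => x 1) (pr 1) y := (pr 1).hasFDerivAt
  have hwt : HasFDerivAt (fun x : E2 => δ * (s * x 0 + (1/2) * (x 0 * x 0)) + (Λ/δ) * (x 1 * x 1) - N * x 1)
      ((δ*(s + y 0)) • pr 0 + ((2*Λ/δ)*(y 1) - N) • pr 1) y := by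
    have H := (((h0.const_mul s).add ((h0.mul h0).const_mul (1/2:ℝ))).const_mul δ).add
      ((h1.mul h1).const_mul (Λ/δ)) |>.sub (h1.const_mul N)
    convert H using 1 <;> try rfl
    ext v
    simp [ContinuousLinearMap.smul_apply, ContinuousLinearMap.add_apply,
      ContinuousLinearMap.sub_apply, smul_eq_mul]
    ring
  apply hwt.congr_of_eventuallyEq
  have hU : IsOpen {x : E2 | 0 < s * x 0} := by
    exact isOpen_lt continuous_const (continuous_const.mul (pr 0).continuous)
  filter_upwards [hU.mem_nhds hy] with x hx
  have habs : |x 0| = s * x 0 := by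
    rcases hs with rfl | rfl
    · simp only [one_mul] at hx ⊢; exact abs_of_pos hx
    · simp only [neg_one_mul] at hx ⊢
      rw [abs_of_neg (by linarith)]
  rw [hw x, habs]; ring

lemma snd_deriv (δ Λ N : ℝ) (hδ : 0 < δ) (w : E2 → ℝ)
    (hw : ∀ x : E2, w x = δ * (|x 0| + (x 0) ^ 2 / 2) + (Λ / δ) * (x 1) ^ 2 - N * x 1)
    (x : E2) (hx : x 0 ≠ 0) :
    fderiv ℝ (fderiv ℝ w) x = bmap δ Λ := by
  set s : ℝ := if 0 < x 0 then 1 else -1 with hs_def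
  have hs : s = 1 ∨ s = -1 := by rw [hs_def]; split <;> simp
  have hsx : 0 < s * x 0 := by
    rw [hs_def]; split
    · simpa
    · rename_i h; rcases lt_or_gt_of_ne hx with h' | h'
      · nlinarith
      · exact absurd h' h
  have hU : IsOpen {y : E2 | 0 < s * y 0} :=
    isOpen_lt continuous_const (continuous_const.mul (pr 0).continuous)
  set F : E2 → (E2 →L[ℝ] ℝ) :=
    fun y => (δ*(s + y 0)) • pr 0 + ((2*Λ/δ)*(y 1) - N) • pr 1 with hF_def
  have hev : fderiv ℝ w =ᶠ[nhds x] F := by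
    filter_upwards [hU.mem_nhds hsx] with y hy
    exact (hasF δ Λ N s w hw y hy hs).fderiv
  have hFd : HasFDerivAt F (bmap δ Λ) x := by
    have hB : HasFDerivAt (fun y : E2 => bmap δ Λ y + ((δ*s) • pr 0 + (-N) • pr 1))
        (bmap δ Λ) x := (bmap δ Λ).hasFDerivAt.add_const _
    apply hB.congr_of_eventuallyEq
    apply Filter.Eventually.of_forall
    intro y
    ext v
    simp [hF_def, bmap, ContinuousLinearMap.smulRight_apply, smul_eq_mul]
    ring
  rw [hev.fderiv_eq, hFd.fderiv]

lemma part3 (δ Λ N : ℝ) (hδ : 0 < δ) (w : E2 → ℝ)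
    (hw : ∀ x : E2, w x = δ * (|x 0| + (x 0) ^ 2 / 2) + (Λ / δ) * (x 1) ^ 2 - N * x 1)
    (x : E2) (hx : x 0 ≠ 0) :
    Matrix.det (Matrix.of fun i j : Fin 2 =>
      iteratedFDeriv ℝ 2 w x
        ![EuclideanSpace.single i (1 : ℝ), EuclideanSpace.single j (1 : ℝ)]) = 2 * Λ := by
  have key : ∀ i j : Fin 2,
      iteratedFDeriv ℝ 2 w x ![EuclideanSpace.single i (1:ℝ), EuclideanSpace.single j (1:ℝ)]
        = bmap δ Λ (EuclideanSpace.single i 1) (EuclideanSpace.single j 1) := by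
    intro i j
    rw [iteratedFDeriv_two_apply, snd_deriv δ Λ N hδ w hw x hx]
    simp
  rw [Matrix.det_fin_two]
  simp only [Matrix.of_apply, key]
  rw [bmap_apply, bmap_apply, bmap_apply, bmap_apply]
  simp [EuclideanSpace.single_apply]
  field_simp

lemma part1 (δ Λ N : ℝ) (hδ : 0 < δ) (hΛ : 0 < Λ) (w : E2 → ℝ)
    (hw : ∀ x : E2, w x = δ * (|x 0| + (x 0) ^ 2 / 2) + (Λ / δ) * (x 1) ^ 2 - N * x 1) :
    ConvexOn ℝ Set.univ w := by
  refine ⟨convex_univ, fun x _ y _ a b ha hb hab => ?_⟩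
  obtain rfl : b = 1 - a := by linarith
  have e0 : (a • x + (1-a) • y) 0 = a * x 0 + (1-a) * y 0 := by
    simp [PiLp.add_apply, PiLp.smul_apply]
  have e1 : (a • x + (1-a) • y) 1 = a * x 1 + (1-a) * y 1 := by
    simp [PiLp.add_apply, PiLp.smul_apply]
  simp only [smul_eq_mul]
  rw [hw, hw, hw, e0, e1]
  have habs : |a * x 0 + (1-a) * y 0| ≤ a * |x 0| + (1-a) * |y 0| := by
    calc |a * x 0 + (1-a) * y 0| ≤ |a * x 0| + |(1-a) * y 0| := abs_add_le _ _
      _ = a * |x 0| + (1-a) * |y 0| := by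
          rw [abs_mul, abs_mul, abs_of_nonneg ha, abs_of_nonneg hb]
  have key : a * (δ * (|x 0| + (x 0)^2/2) + (Λ/δ) * (x 1)^2 - N * x 1)
      + (1-a) * (δ * (|y 0| + (y 0)^2/2) + (Λ/δ) * (y 1)^2 - N * y 1)
      - (δ * (|a * x 0 + (1-a) * y 0| + (a * x 0 + (1-a) * y 0)^2/2)
        + (Λ/δ) * (a * x 1 + (1-a) * y 1)^2 - N * (a * x 1 + (1-a) * y 1))
      = δ * ((a * |x 0| + (1-a) * |y 0|) - |a * x 0 + (1-a) * y 0|)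
        + (δ/2) * (a * (1-a)) * (x 0 - y 0)^2
        + (Λ/δ) * (a * (1-a)) * (x 1 - y 1)^2 := by ring
  have hn1 : 0 ≤ (δ/2) * (a * (1-a)) * (x 0 - y 0)^2 := by positivity
  have hn2 : 0 ≤ (Λ/δ) * (a * (1-a)) * (x 1 - y 1)^2 := by positivity
  have hn3 : 0 ≤ δ * ((a * |x 0| + (1-a) * |y 0|) - |a * x 0 + (1-a) * y 0|) :=
    mul_nonneg hδ.le (by linarith)
  linarith [key, hn1, hn2, hn3]

/-- In the plane, `w(x) = δ(|x₁| + x₁²/2) + (Λ/δ)x₂² − Nx₂` is convex, its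
Monge–Ampère measure satisfies `Mw(E) ≥ 2Λ|E|` for Borel `E`, and `det D²w = 2Λ > Λ` at
every point with `x₁ ≠ 0`. -/
theorem stmt_17 (δ Λ N : ℝ) (hδ : 0 < δ) (hΛ : 0 < Λ) (hN : 0 < N)
    (w : EuclideanSpace ℝ (Fin 2) → ℝ)
    (hw : ∀ x : EuclideanSpace ℝ (Fin 2),
      w x = δ * (|x 0| + (x 0) ^ 2 / 2) + (Λ / δ) * (x 1) ^ 2 - N * x 1) :
    ConvexOn ℝ Set.univ w ∧
    (∀ E : Set (EuclideanSpace ℝ (Fin 2)), MeasurableSet E →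
      ENNReal.ofReal (2 * Λ) * volume E ≤
        volume (⋃ x ∈ E, subgradientAt 2 w Set.univ x)) ∧
    (∀ x : EuclideanSpace ℝ (Fin 2), x 0 ≠ 0 →
      Matrix.det (Matrix.of fun i j : Fin 2 =>
        iteratedFDeriv ℝ 2 w x
          ![EuclideanSpace.single i (1 : ℝ), EuclideanSpace.single j (1 : ℝ)]) = 2 * Λ ∧
      Λ < 2 * Λ) := by
  exact ⟨part1 δ Λ N hδ hΛ w hw,
    fun E hE => part2 δ Λ N hδ hΛ hN w hw E hE,
    fun x hx => ⟨part3 δ Λ N hδ w hw x hx, by linarith⟩⟩
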